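/- Let m ≥ 0 be a real number and n_1, ..., n_r positive integers summing to n. Then ∏_{i=1}^r (m/n_i + 1) ≤ ( m/(n_1 n_2 ⋯ n_r)^(1/r) + (n/r)^(1 - 1/r) )^r. -/

import Mathlib

theorem stmt_2 (r n : ℕ) (hr : 1 ≤ r) (m : ℝ) (hm : 0 ≤ m) (a : Fin r → ℕ)
    (ha : ∀ i, 1 ≤ a i) (hsum : ∑ i, a i = n) :
    ∏ i, (m / (a i : ℝ) + 1) ≤
      (m / (∏ i, (a i : ℝ)) ^ ((1 : ℝ) / r) + ((n : ℝ) / r) ^ (1 - (1 : ℝ) / r)) ^ r := by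
  have hrR : (0:ℝ) < r := by positivity
  set G : ℝ := ∏ i, (a i : ℝ) with hGdef
  have haR : ∀ i, (1:ℝ) ≤ (a i : ℝ) := fun i => by exact_mod_cast ha i
  have hG1 : (1:ℝ) ≤ G := by
    rw [hGdef, ← Nat.cast_prod]
    exact_mod_cast Finset.one_le_prod' fun i _ => ha i
  have hG : (0:ℝ) < G := lt_of_lt_of_le one_pos hG1
  have hnr : r ≤ n := by
    rw [← hsum]
    calc r = ∑ _i : Fin r, 1 := by simp
    _ ≤ ∑ i, a i := Finset.sum_le_sum fun i _ => ha i
  have hn : (0:ℝ) < n := by exact_mod_cast lt_of_lt_of_le (by exact_mod_cast hrR) hnr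
  set A : ℝ := (n:ℝ) / r with hAdef
  have hA : 0 < A := by positivity
  -- Step 1 : A ≤ G
  have hAG : A ≤ G := by
    rw [hAdef, div_le_iff₀ hrR]
    have h1 : ∀ i : Fin r, (a i : ℝ) ≤ G := fun i => by
      rw [hGdef, ← Nat.cast_prod]
      exact_mod_cast Finset.single_le_prod' (fun j _ => ha j) (Finset.mem_univ i)
    calc (n:ℝ) = ∑ i, (a i : ℝ) := by exact_mod_cast hsum.symm
    _ ≤ ∑ _i : Fin r, G := Finset.sum_le_sum fun i _ => h1 i
    _ = G * r := by simp [mul_comm]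
  -- Step 2 : AM-GM : ∏ (m + a i) ≤ (m + A)^r
  have amgm : ∏ i, (m + (a i : ℝ)) ≤ (m + A) ^ r := by
    have hz : ∀ i : Fin r, (0:ℝ) ≤ m + (a i : ℝ) := fun i => by
      have := haR i; linarith
    have h := Real.geom_mean_le_arith_mean_weighted Finset.univ
      (fun _ => (r:ℝ)⁻¹) (fun i => m + (a i : ℝ))
      (fun i _ => by positivity) (by simp [Finset.card_univ]; field_simp)
      (fun i _ => hz i)
    have hprod : (∏ i, (m + (a i : ℝ))) ^ ((r:ℝ)⁻¹) = ∏ i, (m + (a i : ℝ)) ^ ((r:ℝ)⁻¹) := by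
      exact (Real.finset_prod_rpow _ _ (fun i _ => hz i) _).symm
    have hsumr : ∑ i : Fin r, (r:ℝ)⁻¹ * (m + (a i : ℝ)) = m + A := by
      rw [← Finset.mul_sum, Finset.sum_add_distrib]
      have : ∑ i, (a i : ℝ) = (n:ℝ) := by exact_mod_cast hsum
      rw [this, Finset.sum_const, Finset.card_univ, Fintype.card_fin]
      field_simp [hAdef]
      rw [hAdef]; field_simp
      rw [nsmul_eq_mul]
    rw [← hprod, hsumr] at h
    have hP : (0:ℝ) ≤ ∏ i, (m + (a i : ℝ)) := Finset.prod_nonneg fun i _ => hz i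
    calc ∏ i, (m + (a i : ℝ))
        = ((∏ i, (m + (a i : ℝ))) ^ ((r:ℝ)⁻¹)) ^ (r:ℕ) := by
          rw [← Real.rpow_natCast ((∏ i, (m + (a i : ℝ))) ^ ((r:ℝ)⁻¹)) r,
            ← Real.rpow_mul hP, inv_mul_cancel₀ (ne_of_gt hrR), Real.rpow_one]
    _ ≤ (m + A) ^ r := pow_le_pow_left₀ (Real.rpow_nonneg hP _) h r
  -- Step 3 : m + A ≤ m + A^(1-1/r) * G^(1/r)
  have h3 : m + A ≤ m + A ^ (1 - (1:ℝ)/r) * G ^ ((1:ℝ)/r) := by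
    have : A = A ^ (1 - (1:ℝ)/r) * A ^ ((1:ℝ)/r) := by
      rw [← Real.rpow_add hA]; norm_num
    nlinarith [Real.rpow_le_rpow hA.le hAG (by positivity : (0:ℝ) ≤ (1:ℝ)/r),
      Real.rpow_nonneg hA.le (1 - (1:ℝ)/r), Real.rpow_pos_of_pos hA ((1:ℝ)/r)]
  -- assemble
  have hGr : (G ^ ((1:ℝ)/r)) ^ (r:ℕ) = G := by
    rw [← Real.rpow_natCast (G ^ ((1:ℝ)/r)) r, ← Real.rpow_mul hG.le]
    field_simp
    simp
  have hGpos : (0:ℝ) < G ^ ((1:ℝ)/r) := Real.rpow_pos_of_pos hG _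
  have lhs_eq : ∏ i, (m / (a i : ℝ) + 1) = (∏ i, (m + (a i : ℝ))) / G := by
    rw [hGdef, ← Finset.prod_div_distrib]
    refine Finset.prod_congr rfl fun i _ => ?_
    have hai : (0:ℝ) < (a i : ℝ) := lt_of_lt_of_le one_pos (haR i)
    field_simp
  have rhs_eq : (m / G ^ ((1:ℝ)/r) + A ^ (1 - (1:ℝ)/r)) ^ r
      = (m + A ^ (1 - (1:ℝ)/r) * G ^ ((1:ℝ)/r)) ^ r / G := by
    have he : m / G ^ ((1:ℝ)/r) + A ^ (1 - (1:ℝ)/r)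
        = (m + A ^ (1 - (1:ℝ)/r) * G ^ ((1:ℝ)/r)) / G ^ ((1:ℝ)/r) := by
      field_simp
    rw [he, div_pow, hGr]
  rw [lhs_eq, rhs_eq, div_le_div_iff_of_pos_right hG]
  calc ∏ i, (m + (a i : ℝ)) ≤ (m + A) ^ r := amgm
  _ ≤ (m + A ^ (1 - (1:ℝ)/r) * G ^ ((1:ℝ)/r)) ^ r :=
      pow_le_pow_left₀ (by positivity) h3 r
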